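/- Let N : ℕ, let f : ℝ → ℂ be differentiable at ξ(ρ), and let ρ : Fin N → ℂ with ρ ≠ 0 and ξ(ρ) < 1. Then P_f is Fréchet differentiable over ℝ at ρ, and the trace over ℂ of the ℂ-linear part of its derivative equals (N − 1)·f(ξ) − 2·(1 − ξ)·(1 − √(1 − ξ))·f′(ξ), where ξ := ξ(ρ) and f′(ξ) := deriv f at ξ. (Toy-model trace formula (toy:trace), the analogue of Proposition 2, item 6.) -/

import Mathlib

noncomputable section

open scoped BigOperators

namespace PureSpinorToy

variable {N : ℕ}

/-- Complex bilinear pairing `B(ρ,σ) = ∑ I, ρ_I σ_I`. -/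
def B (ρ σ : Fin N → ℂ) : ℂ := ∑ I, ρ I * σ I

/-- Hermitian inner product `⟪ρ,σ⟫ = ∑ I, conj(ρ_I) σ_I`. -/
def hInner (ρ σ : Fin N → ℂ) : ℂ := ∑ I, (starRingEnd ℂ) (ρ I) * σ I

/-- Norm square `‖ρ‖² = ⟪ρ,ρ⟫` (a nonnegative real). -/
def nsq (ρ : Fin N → ℂ) : ℝ := (hInner ρ ρ).re

/-- Componentwise complex conjugation `ρ̄`. -/
def conjFun (ρ : Fin N → ℂ) : Fin N → ℂ := fun I => (starRingEnd ℂ) (ρ I)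

/-- `ζ(ρ) = B(ρ,ρ)/‖ρ‖²`. -/
def zeta (ρ : Fin N → ℂ) : ℂ := B ρ ρ / (nsq ρ : ℂ)

/-- `ξ(ρ) = |ζ(ρ)|²`. -/
def xi (ρ : Fin N → ℂ) : ℝ := Complex.normSq (zeta ρ)

/-- The family of projection maps
`P_f(ρ) = f(ξ(ρ)) • (ρ − (ζ(ρ)/(1+√(1−ξ(ρ)))) • ρ̄)`. -/
def P (f : ℝ → ℂ) (ρ : Fin N → ℂ) : Fin N → ℂ :=
  f (xi ρ) • (ρ - (zeta ρ / (1 + (Real.sqrt (1 - xi ρ) : ℂ))) • conjFun ρ)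

/-- The special function `h(t) = (1+√(1−t))/(2√(1−t))`. -/
def h (t : ℝ) : ℂ := (((1 + Real.sqrt (1 - t)) / (2 * Real.sqrt (1 - t)) : ℝ) : ℂ)

/-- The potential `Φ(ρ) = (‖ρ‖²/2)(1+√(1−ξ(ρ)))`. -/
def Phi (ρ : Fin N → ℂ) : ℝ := (nsq ρ / 2) * (1 + Real.sqrt (1 - xi ρ))


/-! ### Auxiliary machinery (added for the proof) -/

section Aux

abbrev pj (I : Fin N) : (Fin N → ℂ) →L[ℝ] ℂ :=
  ContinuousLinearMap.proj (R := ℝ) (φ := fun _ : Fin N => ℂ) I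
abbrev cj : ℂ →L[ℝ] ℂ := Complex.conjCLE.toContinuousLinearMap

def sq (ρ : Fin N → ℂ) : ℝ := Real.sqrt (1 - xi ρ)
def DH (ρ v : Fin N → ℂ) : ℂ := hInner ρ v + (starRingEnd ℂ) (hInner ρ v)
def Dz (ρ v : Fin N → ℂ) : ℂ := (2 * B ρ v - zeta ρ * DH ρ v) / ((nsq ρ : ℝ) : ℂ)
def Dx (ρ v : Fin N → ℂ) : ℂ :=
  (starRingEnd ℂ) (zeta ρ) * Dz ρ v + zeta ρ * (starRingEnd ℂ) (Dz ρ v)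
def Dc (ρ v : Fin N → ℂ) : ℂ :=
  Dz ρ v / (1 + (sq ρ : ℂ)) + zeta ρ * Dx ρ v / (2 * (sq ρ : ℂ) * (1 + (sq ρ : ℂ))^2)
def DP (f : ℝ → ℂ) (ρ v : Fin N → ℂ) : Fin N → ℂ := fun i =>
  Dx ρ v * deriv f (xi ρ) * (ρ i - (zeta ρ / (1 + (sq ρ : ℂ))) * (starRingEnd ℂ) (ρ i))
  + f (xi ρ) * (v i - Dc ρ v * (starRingEnd ℂ) (ρ i)
      - (zeta ρ / (1 + (sq ρ : ℂ))) * (starRingEnd ℂ) (v i))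

lemma hdiv' {E : Type*} [NormedAddCommGroup E] [NormedSpace ℝ E] {ρ : E}
    {c d : E → ℂ} {c' d' : E →L[ℝ] ℂ}
    (hc : HasFDerivAt c c' ρ) (hd : HasFDerivAt d d' ρ) (hx : d ρ ≠ 0) :
    ∃ L : E →L[ℝ] ℂ, HasFDerivAt (fun σ => c σ / d σ) L ρ ∧
      ∀ v, L v = (c' v * d ρ - c ρ * d' v) / d ρ ^ 2 := by
  have hi : HasFDerivAt (fun σ => (d σ)⁻¹)
      (((ContinuousLinearMap.smulRight (1 : ℂ →L[ℂ] ℂ) (-(d ρ ^ 2)⁻¹)).restrictScalars ℝ).comp d') ρ :=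
    ((hasDerivAt_inv hx).hasFDerivAt.restrictScalars ℝ).comp ρ hd
  have hm := hc.mul hi
  refine ⟨_, hm.congr_of_eventuallyEq (Filter.Eventually.of_forall fun σ => div_eq_mul_inv _ _),
    fun v => ?_⟩
  simp [ContinuousLinearMap.smul_apply, ContinuousLinearMap.comp_apply,
    ContinuousLinearMap.add_apply]
  field_simp
  ring

lemma hB' (ρ : Fin N → ℂ) :
    ∃ L : (Fin N → ℂ) →L[ℝ] ℂ, HasFDerivAt (fun σ : Fin N → ℂ => B σ σ) L ρ ∧
      ∀ v, L v = 2 * B ρ v := by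
  refine ⟨_, HasFDerivAt.fun_sum (fun I _ => ((pj I).hasFDerivAt.mul (pj I).hasFDerivAt)),
    fun v => ?_⟩
  simp [B, Finset.mul_sum]
  exact Finset.sum_congr rfl fun i _ => by ring

lemma hH' (ρ : Fin N → ℂ) :
    ∃ L : (Fin N → ℂ) →L[ℝ] ℂ, HasFDerivAt (fun σ : Fin N → ℂ => hInner σ σ) L ρ ∧
      ∀ v, L v = hInner ρ v + (starRingEnd ℂ) (hInner ρ v) := by
  refine ⟨_, HasFDerivAt.fun_sum (fun I _ =>
    ((cj.comp (pj I)).hasFDerivAt.mul (pj I).hasFDerivAt)), fun v => ?_⟩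
  simp [hInner, map_sum, Finset.sum_add_distrib, mul_comm]

lemma nsq_eq (ρ : Fin N → ℂ) : nsq ρ = ∑ I, Complex.normSq (ρ I) := by
  have h1 : ∀ z : ℂ, (starRingEnd ℂ) z * z = (Complex.normSq z : ℂ) := fun z => by
    rw [mul_comm, Complex.mul_conj]
  simp only [nsq, hInner, h1]
  rw [Complex.re_sum]
  simp

lemma nsq_pos {ρ : Fin N → ℂ} (hρ : ρ ≠ 0) : 0 < nsq ρ := by
  rw [nsq_eq]
  obtain ⟨i, hi⟩ : ∃ i, ρ i ≠ 0 := by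
    by_contra h
    push_neg at h
    exact hρ (funext h)
  exact Finset.sum_pos' (fun j _ => Complex.normSq_nonneg _)
    ⟨i, Finset.mem_univ i, Complex.normSq_pos.mpr hi⟩

lemma hInner_self (ρ : Fin N → ℂ) : hInner ρ ρ = ((nsq ρ : ℝ) : ℂ) := by
  have h1 : ∀ z : ℂ, (starRingEnd ℂ) z * z = (Complex.normSq z : ℂ) := fun z => by
    rw [mul_comm, Complex.mul_conj]
  rw [nsq_eq]
  simp [hInner, h1]

lemma B_conjFun (ρ : Fin N → ℂ) : B ρ (conjFun ρ) = ((nsq ρ : ℝ) : ℂ) := by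
  rw [nsq_eq]
  simp [B, conjFun, Complex.mul_conj]

lemma hInner_conjFun (ρ : Fin N → ℂ) : hInner ρ (conjFun ρ) = (starRingEnd ℂ) (B ρ ρ) := by
  simp [B, hInner, conjFun, map_sum]

lemma B_smul (ρ v : Fin N → ℂ) (a : ℂ) : B ρ (a • v) = a * B ρ v := by
  simp [B, Finset.mul_sum]; exact Finset.sum_congr rfl fun i _ => by ring

lemma hInner_smul (ρ v : Fin N → ℂ) (a : ℂ) : hInner ρ (a • v) = a * hInner ρ v := by
  simp [hInner, Finset.mul_sum]; exact Finset.sum_congr rfl fun i _ => by ring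

lemma B_sub (ρ v w : Fin N → ℂ) : B ρ (v - w) = B ρ v - B ρ w := by
  simp [B, mul_sub, Finset.sum_sub_distrib]

lemma hInner_sub (ρ v w : Fin N → ℂ) : hInner ρ (v - w) = hInner ρ v - hInner ρ w := by
  simp [hInner, mul_sub, Finset.sum_sub_distrib]

lemma real_add_conj_re (z : ℂ) :
    (((z + (starRingEnd ℂ) z).re : ℝ) : ℂ) = z + (starRingEnd ℂ) z := by
  rw [Complex.add_conj]; simp

lemma c2 (a b : ℂ) : ((a.re * b.re + a.re * b.re + (a.im * b.im + a.im * b.im) : ℝ) : ℂ)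
    = (starRingEnd ℂ) a * b + a * (starRingEnd ℂ) b := by
  apply Complex.ext <;> simp <;> ring

def phiB (ρ : Fin N → ℂ) : (Fin N → ℂ) →ₗ[ℂ] ℂ := ∑ I, ρ I • LinearMap.proj I
def phiH (ρ : Fin N → ℂ) : (Fin N → ℂ) →ₗ[ℂ] ℂ :=
  ∑ I, (starRingEnd ℂ) (ρ I) • LinearMap.proj I

lemma phiB_apply (ρ v : Fin N → ℂ) : phiB ρ v = B ρ v := by
  simp [phiB, B, LinearMap.sum_apply, LinearMap.smul_apply, smul_eq_mul]

lemma phiH_apply (ρ v : Fin N → ℂ) : phiH ρ v = hInner ρ v := by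
  simp [phiH, hInner, LinearMap.sum_apply, LinearMap.smul_apply, smul_eq_mul]

lemma trace_smulRight' {n : ℕ} (φ : (Fin n → ℂ) →ₗ[ℂ] ℂ) (w : Fin n → ℂ) :
    LinearMap.trace ℂ (Fin n → ℂ) (φ.smulRight w) = φ w := by
  rw [LinearMap.trace_eq_matrix_trace ℂ (Pi.basisFun ℂ (Fin n))]
  rw [Matrix.trace]
  simp only [Matrix.diag, LinearMap.toMatrix_apply, LinearMap.smulRight_apply,
    Pi.basisFun_repr, Pi.basisFun_apply, smul_eq_mul]
  have hw : w = ∑ i, w i • (Pi.single i (1:ℂ) : Fin n → ℂ) := by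
    funext j
    simp [Pi.single_apply, Finset.sum_apply]
  conv_rhs => rw [hw]
  rw [map_sum]
  simp only [map_smul, smul_eq_mul, Pi.smul_apply]
  exact Finset.sum_congr rfl fun i _ => mul_comm _ _

lemma trace_id' {n : ℕ} : LinearMap.trace ℂ (Fin n → ℂ) LinearMap.id = n := by
  rw [LinearMap.trace_id]
  simp

theorem master (f : ℝ → ℂ) (ρ : Fin N → ℂ) (hρ : ρ ≠ 0) (hξ : xi ρ < 1)
    (hfd : DifferentiableAt ℝ f (xi ρ)) :
    ∃ L : (Fin N → ℂ) →L[ℝ] (Fin N → ℂ), HasFDerivAt (P f) L ρ ∧ ∀ v, L v = DP f ρ v := by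
  have hn0 : 0 < nsq ρ := nsq_pos hρ
  have h1x : 0 < 1 - xi ρ := by linarith
  have hs0 : 0 < sq ρ := Real.sqrt_pos.mpr h1x
  have hnC : ((nsq ρ : ℝ) : ℂ) ≠ 0 := by exact_mod_cast ne_of_gt hn0
  have hdC : (1 + (sq ρ : ℂ)) ≠ 0 := by
    intro h
    have := congrArg Complex.re h
    simp at this
    linarith
  have hsC : ((sq ρ : ℝ) : ℂ) ≠ 0 := by exact_mod_cast ne_of_gt hs0
  have hB0 : B ρ ρ = zeta ρ * ((nsq ρ : ℝ) : ℂ) := by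
    rw [zeta]; field_simp
  obtain ⟨LB, hLB, hLBv⟩ := hB' ρ
  obtain ⟨LH, hLH, hLHv⟩ := hH' ρ
  have hLn : HasFDerivAt nsq (Complex.reCLM.comp LH) ρ :=
    Complex.reCLM.hasFDerivAt.comp ρ hLH
  have hLnC : HasFDerivAt (fun σ : Fin N → ℂ => ((nsq σ : ℝ) : ℂ))
      (Complex.ofRealCLM.comp (Complex.reCLM.comp LH)) ρ :=
    Complex.ofRealCLM.hasFDerivAt.comp ρ hLn
  have hLnCv : ∀ v, (Complex.ofRealCLM.comp (Complex.reCLM.comp LH)) v = DH ρ v := by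
    intro v
    simp only [ContinuousLinearMap.comp_apply, Complex.ofRealCLM_apply, Complex.reCLM_apply]
    rw [hLHv]
    exact real_add_conj_re _
  obtain ⟨Lz, hLz, hLzv0⟩ := hdiv' hLB hLnC hnC
  have hLzv : ∀ v, Lz v = Dz ρ v := by
    intro v
    rw [hLzv0, hLBv, hLnCv, hB0, Dz]
    field_simp
  have hre : HasFDerivAt (fun σ : Fin N → ℂ => (zeta σ).re) (Complex.reCLM.comp Lz) ρ :=
    Complex.reCLM.hasFDerivAt.comp ρ hLz
  have him : HasFDerivAt (fun σ : Fin N → ℂ => (zeta σ).im) (Complex.imCLM.comp Lz) ρ :=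
    Complex.imCLM.hasFDerivAt.comp ρ hLz
  have hxi : HasFDerivAt xi
      (((zeta ρ).re • (Complex.reCLM.comp Lz) + (zeta ρ).re • (Complex.reCLM.comp Lz))
        + ((zeta ρ).im • (Complex.imCLM.comp Lz) + (zeta ρ).im • (Complex.imCLM.comp Lz))) ρ := by
    refine HasFDerivAt.congr_of_eventuallyEq ((hre.mul hre).add (him.mul him))
      (Filter.Eventually.of_forall fun σ => ?_)
    simp [xi, Complex.normSq_apply]
  set Lxi := (((zeta ρ).re • (Complex.reCLM.comp Lz) + (zeta ρ).re • (Complex.reCLM.comp Lz))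
        + ((zeta ρ).im • (Complex.imCLM.comp Lz) + (zeta ρ).im • (Complex.imCLM.comp Lz)))
    with hLxidef
  have hLxiv : ∀ v, ((Lxi v : ℝ) : ℂ) = Dx ρ v := by
    intro v
    have : Lxi v = (zeta ρ).re * (Lz v).re + (zeta ρ).re * (Lz v).re
        + ((zeta ρ).im * (Lz v).im + (zeta ρ).im * (Lz v).im) := by
      simp [hLxidef, ContinuousLinearMap.add_apply, ContinuousLinearMap.smul_apply,
        smul_eq_mul]
    rw [this, c2, hLzv, Dx]
  have hsq : HasFDerivAt (fun σ : Fin N → ℂ => Real.sqrt (1 - xi σ))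
      ((1 / (2 * Real.sqrt (1 - xi ρ))) • (-Lxi)) ρ :=
    (Real.hasDerivAt_sqrt (ne_of_gt h1x)).comp_hasFDerivAt ρ (hxi.const_sub 1)
  have hden : HasFDerivAt (fun σ : Fin N → ℂ => (1 + (Real.sqrt (1 - xi σ) : ℂ)))
      (Complex.ofRealCLM.comp ((1 / (2 * Real.sqrt (1 - xi ρ))) • (-Lxi))) ρ :=
    (Complex.ofRealCLM.hasFDerivAt.comp ρ hsq).const_add 1
  have hdenv : ∀ v, (Complex.ofRealCLM.comp ((1 / (2 * Real.sqrt (1 - xi ρ))) • (-Lxi))) v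
      = -(Dx ρ v) / (2 * (sq ρ : ℂ)) := by
    intro v
    simp only [ContinuousLinearMap.comp_apply, ContinuousLinearMap.smul_apply,
      ContinuousLinearMap.neg_apply, Complex.ofRealCLM_apply, smul_eq_mul]
    push_cast
    rw [hLxiv]
    rw [show Real.sqrt (1 - xi ρ) = sq ρ from rfl]
    field_simp
  obtain ⟨Lc, hLc, hLcv0⟩ := hdiv' hLz hden hdC
  have hLcv : ∀ v, Lc v = Dc ρ v := by
    intro v
    rw [hLcv0, hLzv, hdenv]
    rw [show Real.sqrt (1 - xi ρ) = sq ρ from rfl,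
      show B ρ ρ / ((nsq ρ : ℝ) : ℂ) = zeta ρ from rfl, Dc]
    field_simp
    ring
  have hconj : HasFDerivAt (conjFun (N := N))
      (ContinuousLinearMap.pi (fun I => cj.comp (pj I))) ρ :=
    (ContinuousLinearMap.pi (fun I => cj.comp (pj I))).hasFDerivAt
  have hsmul := hLc.smul hconj
  have hsub := (hasFDerivAt_id ρ).sub hsmul
  have hfc := hfd.hasFDerivAt.comp ρ hxi
  have hP := hfc.smul hsub
  refine ⟨_, hP, fun v => ?_⟩
  have hfder : ∀ r : ℝ, (fderiv ℝ f (xi ρ)) r = r • deriv f (xi ρ) := by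
    intro r
    rw [show r = r • (1 : ℝ) by simp, map_smul, fderiv_apply_one_eq_deriv]
    simp
  funext i
  simp only [ContinuousLinearMap.add_apply, ContinuousLinearMap.smul_apply,
    ContinuousLinearMap.smulRight_apply, ContinuousLinearMap.comp_apply,
    ContinuousLinearMap.sub_apply, ContinuousLinearMap.coe_id', id_eq,
    ContinuousLinearMap.pi_apply, Pi.add_apply, Pi.sub_apply, Pi.smul_apply, smul_eq_mul,
    hfder]
  rw [hLcv]
  simp only [DP]
  have hx' : ((Lxi v : ℝ) : ℂ) = Dx ρ v := hLxiv v
  simp only [Function.comp_apply, Complex.conjCLE_apply, ContinuousLinearMap.proj_apply,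
    Complex.real_smul, hx', conjFun,
    show B ρ ρ / ((nsq ρ : ℝ) : ℂ) = zeta ρ from rfl,
    show Real.sqrt (1 - xi ρ) = sq ρ from rfl]
  simp only [show ∀ z : ℂ, cj z = (starRingEnd ℂ) z from fun z => rfl]
  simp only [Pi.smul_apply', Pi.smul_apply, smul_eq_mul, conjFun, show B ρ ρ * ((nsq ρ : ℝ) : ℂ)⁻¹ = zeta ρ from (div_eq_mul_inv _ _).symm, show Real.sqrt (1 - xi ρ) = sq ρ from rfl, show ∀ z : ℂ, cj z = (starRingEnd ℂ) z from fun z => rfl]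
  simp only [zeta, div_eq_mul_inv]
  ring

end Aux

set_option maxHeartbeats 1000000

/-- Toy model trace formula (toy:trace), analogue of Proposition 2 item 6: the trace
over ℂ of the ℂ-linear part of the Jacobian of `P_f` at `ρ` equals
`(N−1)·f(ξ) − 2(1−ξ)(1−√(1−ξ))·f′(ξ)`. -/
theorem statement16 {N : ℕ} (f : ℝ → ℂ) (ρ : Fin N → ℂ) (hρ : ρ ≠ 0) (hξ : xi ρ < 1)
    (hfd : DifferentiableAt ℝ f (xi ρ)) :
    DifferentiableAt ℝ (P f) ρ ∧
    ∃ Pc : (Fin N → ℂ) →ₗ[ℂ] (Fin N → ℂ),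
      (∀ v, Pc v = (2 : ℂ)⁻¹ •
          (fderiv ℝ (P f) ρ v - Complex.I • fderiv ℝ (P f) ρ (Complex.I • v))) ∧
      LinearMap.trace ℂ (Fin N → ℂ) Pc
        = ((N : ℂ) - 1) * f (xi ρ)
          - 2 * ((1 - xi ρ : ℝ) : ℂ) * ((1 - Real.sqrt (1 - xi ρ) : ℝ) : ℂ)
            * deriv f (xi ρ) := by
  obtain ⟨L, hL, hLv⟩ := master f ρ hρ hξ hfd
  have hdiff : DifferentiableAt ℝ (P f) ρ := hL.differentiableAt
  refine ⟨hdiff, ?_⟩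
  have hfe : fderiv ℝ (P f) ρ = L := hL.fderiv
  have hn0 : 0 < nsq ρ := nsq_pos hρ
  have h1x : 0 < 1 - xi ρ := by linarith
  have hs0 : 0 < sq ρ := Real.sqrt_pos.mpr h1x
  have hnC : ((nsq ρ : ℝ) : ℂ) ≠ 0 := by exact_mod_cast ne_of_gt hn0
  have hdC : (1 + (sq ρ : ℂ)) ≠ 0 := by
    intro h
    have := congrArg Complex.re h
    simp at this
    linarith
  have hsC : ((sq ρ : ℝ) : ℂ) ≠ 0 := by exact_mod_cast ne_of_gt hs0
  have hB0 : B ρ ρ = zeta ρ * ((nsq ρ : ℝ) : ℂ) := by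
    rw [zeta]; field_simp
  have hs2 : ((sq ρ : ℝ) : ℂ) ^ 2 = 1 - ((xi ρ : ℝ) : ℂ) := by
    have : (sq ρ) ^ 2 = 1 - xi ρ := Real.sq_sqrt h1x.le
    exact_mod_cast this
  have hxiC : ((xi ρ : ℝ) : ℂ) = (starRingEnd ℂ) (zeta ρ) * zeta ρ :=
    Complex.normSq_eq_conj_mul_self
  obtain ⟨t, ht, hdC'⟩ : ∃ t : ℂ, t = 1 + ((sq ρ : ℝ) : ℂ) ∧ t ≠ 0 := ⟨_, rfl, hdC⟩
  refine ⟨(f (xi ρ)) • LinearMap.id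
    + ((deriv f (xi ρ) * 2 * (starRingEnd ℂ) (zeta ρ) / ((nsq ρ : ℝ) : ℂ)) • phiB ρ
       + (-(deriv f (xi ρ) * 2 * (zeta ρ * (starRingEnd ℂ) (zeta ρ)) / ((nsq ρ : ℝ) : ℂ))) • phiH ρ).smulRight
        (ρ - (zeta ρ / t) • conjFun ρ)
    + ((-(f (xi ρ) * (2 / (((nsq ρ : ℝ) : ℂ) * t)
            + zeta ρ * (starRingEnd ℂ) (zeta ρ)
              / (((nsq ρ : ℝ) : ℂ) * (sq ρ : ℂ) * t^2)))) • phiB ρ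
       + (f (xi ρ) * (zeta ρ / (((nsq ρ : ℝ) : ℂ) * t)
            + zeta ρ ^ 2 * (starRingEnd ℂ) (zeta ρ)
              / (((nsq ρ : ℝ) : ℂ) * (sq ρ : ℂ) * t^2))) • phiH ρ).smulRight
        (conjFun ρ), ?_, ?_⟩
  · intro v
    rw [hfe, hLv v, hLv (Complex.I • v)]
    have hBs : B ρ (Complex.I • v) = Complex.I * B ρ v := B_smul ρ v Complex.I
    have hHs : hInner ρ (Complex.I • v) = Complex.I * hInner ρ v := hInner_smul ρ v Complex.I
    have key0 : (2 : ℂ)⁻¹ * (Dz ρ v - Complex.I * Dz ρ (Complex.I • v))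
        = (2 * B ρ v - zeta ρ * hInner ρ v) / ((nsq ρ : ℝ) : ℂ) := by
      simp only [Dz, DH, hBs, hHs, map_mul, map_add, map_sub, map_div₀,
        Complex.conj_I, Complex.conj_conj, Complex.conj_ofReal, map_ofNat]
      field_simp
      ring_nf
      simp only [Complex.I_sq]
      ring
    have ckey : (2 : ℂ)⁻¹ * ((starRingEnd ℂ) (Dz ρ v)
          - Complex.I * (starRingEnd ℂ) (Dz ρ (Complex.I • v)))
        = -((starRingEnd ℂ) (zeta ρ) * hInner ρ v) / ((nsq ρ : ℝ) : ℂ) := by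
      simp only [Dz, DH, hBs, hHs, map_mul, map_add, map_sub, map_div₀,
        Complex.conj_I, Complex.conj_conj, Complex.conj_ofReal, map_ofNat]
      field_simp
      ring_nf
      simp only [Complex.I_sq]
      simp only [map_neg, Complex.conj_I, neg_neg]
      ring_nf
      simp only [Complex.I_sq]
      ring
    have key1 : (2 : ℂ)⁻¹ * (Dx ρ v - Complex.I * Dx ρ (Complex.I • v))
        = (2 * (starRingEnd ℂ) (zeta ρ) * B ρ v
            - 2 * (zeta ρ * (starRingEnd ℂ) (zeta ρ)) * hInner ρ v) / ((nsq ρ : ℝ) : ℂ) := by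
      simp only [Dx]
      linear_combination (starRingEnd ℂ) (zeta ρ) * key0 + zeta ρ * ckey
    have key2 : (2 : ℂ)⁻¹ * (Dc ρ v - Complex.I * Dc ρ (Complex.I • v))
        = (2 / (((nsq ρ : ℝ) : ℂ) * t)
            + zeta ρ * (starRingEnd ℂ) (zeta ρ)
              / (((nsq ρ : ℝ) : ℂ) * (sq ρ : ℂ) * t^2)) * B ρ v
          + (-(zeta ρ / (((nsq ρ : ℝ) : ℂ) * t))
            - zeta ρ ^ 2 * (starRingEnd ℂ) (zeta ρ)
              / (((nsq ρ : ℝ) : ℂ) * (sq ρ : ℂ) * t^2)) * hInner ρ v := by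
      simp only [Dc]
      rw [← ht]
      linear_combination (1 / t) * key0
        + (zeta ρ / (2 * (sq ρ : ℂ) * t^2)) * key1
    funext i
    simp only [LinearMap.add_apply, LinearMap.smul_apply, LinearMap.smulRight_apply,
      LinearMap.id_apply, phiB_apply, phiH_apply, Pi.add_apply, Pi.sub_apply,
      Pi.smul_apply, smul_eq_mul, DP, conjFun, map_mul, Complex.conj_I]
    rw [← ht]
    linear_combination (-(deriv f (xi ρ) * (ρ i - zeta ρ / t * (starRingEnd ℂ) (ρ i)))) * key1
      + (f (xi ρ) * (starRingEnd ℂ) (ρ i)) * key2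
      + ((2:ℂ)⁻¹ * f (xi ρ) * v i + (2:ℂ)⁻¹ * f (xi ρ) * (zeta ρ / t) * (starRingEnd ℂ) (v i))
        * Complex.I_sq
  · rw [map_add, map_add, map_smul, trace_id', trace_smulRight', trace_smulRight']
    simp only [LinearMap.add_apply, LinearMap.smul_apply, phiB_apply, phiH_apply,
      smul_eq_mul]
    rw [B_sub, hInner_sub, B_smul, hInner_smul, B_conjFun, hInner_conjFun,
      hInner_self, hB0]
    simp only [map_mul, Complex.conj_ofReal]
    rw [show Real.sqrt (1 - xi ρ) = sq ρ from rfl]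
    rw [show ((1 - xi ρ : ℝ) : ℂ) = ((sq ρ : ℝ) : ℂ) ^ 2 by
      rw [hs2]; push_cast; ring]
    rw [show ((1 - sq ρ : ℝ) : ℂ) = 1 - ((sq ρ : ℝ) : ℂ) by push_cast; ring]
    have hzz : (starRingEnd ℂ) (zeta ρ) * zeta ρ = 1 - ((sq ρ : ℝ) : ℂ) ^ 2 := by
      rw [← hxiC]
      linear_combination hs2
    have e1 : deriv f (xi ρ) * 2 * (starRingEnd ℂ) (zeta ρ) / ((nsq ρ : ℝ) : ℂ)
          * (zeta ρ * ((nsq ρ : ℝ) : ℂ) - zeta ρ / t * ((nsq ρ : ℝ) : ℂ))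
        + -(deriv f (xi ρ) * 2 * (zeta ρ * (starRingEnd ℂ) (zeta ρ))) / ((nsq ρ : ℝ) : ℂ)
          * (((nsq ρ : ℝ) : ℂ) - zeta ρ / t * ((starRingEnd ℂ) (zeta ρ) * ((nsq ρ : ℝ) : ℂ)))
        = 2 * deriv f (xi ρ) * ((starRingEnd ℂ) (zeta ρ) * zeta ρ)
            * ((starRingEnd ℂ) (zeta ρ) * zeta ρ - 1) / t := by
      field_simp
      ring
    have e2 : -(f (xi ρ) * (2 / (((nsq ρ : ℝ) : ℂ) * t)
          + zeta ρ * (starRingEnd ℂ) (zeta ρ) / (((nsq ρ : ℝ) : ℂ) * ((sq ρ : ℝ) : ℂ) * t ^ 2)))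
            * ((nsq ρ : ℝ) : ℂ)
        = -(f (xi ρ) * (2 / t
            + zeta ρ * (starRingEnd ℂ) (zeta ρ) / (((sq ρ : ℝ) : ℂ) * t ^ 2))) := by
      field_simp
    have e3 : f (xi ρ) * (zeta ρ / (((nsq ρ : ℝ) : ℂ) * t)
          + zeta ρ ^ 2 * (starRingEnd ℂ) (zeta ρ) / (((nsq ρ : ℝ) : ℂ) * ((sq ρ : ℝ) : ℂ) * t ^ 2))
            * ((starRingEnd ℂ) (zeta ρ) * ((nsq ρ : ℝ) : ℂ))
        = f (xi ρ) * (zeta ρ * (starRingEnd ℂ) (zeta ρ) / t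
            + zeta ρ ^ 2 * ((starRingEnd ℂ) (zeta ρ)) ^ 2 / (((sq ρ : ℝ) : ℂ) * t ^ 2)) := by
      field_simp
    have e4 : f (xi ρ) * (zeta ρ * (starRingEnd ℂ) (zeta ρ) / t
          + zeta ρ ^ 2 * ((starRingEnd ℂ) (zeta ρ)) ^ 2 / (((sq ρ : ℝ) : ℂ) * t ^ 2))
        - f (xi ρ) * (2 / t
            + zeta ρ * (starRingEnd ℂ) (zeta ρ) / (((sq ρ : ℝ) : ℂ) * t ^ 2))
        = f (xi ρ) * (((starRingEnd ℂ) (zeta ρ) * zeta ρ - 2) / t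
          + ((starRingEnd ℂ) (zeta ρ) * zeta ρ) * ((starRingEnd ℂ) (zeta ρ) * zeta ρ - 1)
            / (((sq ρ : ℝ) : ℂ) * t ^ 2)) := by
      field_simp
      ring
    trans ((N : ℂ) * f (xi ρ)
      + 2 * deriv f (xi ρ)
          * ((starRingEnd ℂ) (zeta ρ) * zeta ρ) * ((starRingEnd ℂ) (zeta ρ) * zeta ρ - 1) / t
      + f (xi ρ) * (((starRingEnd ℂ) (zeta ρ) * zeta ρ - 2) / t
          + ((starRingEnd ℂ) (zeta ρ) * zeta ρ) * ((starRingEnd ℂ) (zeta ρ) * zeta ρ - 1)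
            / (((sq ρ : ℝ) : ℂ) * t ^ 2)))
    · linear_combination e1 + e2 + e3 + e4
    · rw [hzz, ht]
      field_simp [hsC, hdC]
      ring

end PureSpinorToy
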